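/- Let d ≥ 2. For every κ > 0 there exists a constant C = C(d,κ) such that for all ε ∈ (0,1], all k₀ ∈ ℤ^d with |k₀| ≤ ε^{-1}, all α ∈ ℝ and all β ≥ 1: ∑_{k ∈ ℤ^d, |k| < ε^{-1}} 1/| |k|² + |k₀ − k|² − α + iβ | ≤ C ε^{1 − d − κ}. -/

import Mathlib

open scoped BigOperators Classical

noncomputable section

namespace KWE

/-- squared Euclidean norm of a lattice point -/
def nsq {d : ℕ} (k : Fin d → ℤ) : ℝ := ∑ i, ((k i : ℝ))^2

/-- Euclidean norm of a lattice point -/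
def znorm {d : ℕ} (k : Fin d → ℤ) : ℝ := Real.sqrt (nsq k)

lemma abs_inv_le (X β : ℝ) (hβ : 1 ≤ β) :
    (‖(X:ℂ) + Complex.I * (β:ℂ)‖)⁻¹ ≤ (max 1 |X|)⁻¹ := by
  have h1 : max 1 |X| ≤ ‖(X:ℂ) + Complex.I * (β:ℂ)‖ := by
    have hre : ((X:ℂ) + Complex.I * (β:ℂ)).re = X := by simp
    have him : ((X:ℂ) + Complex.I * (β:ℂ)).im = β := by simp
    have h2 := Complex.abs_re_le_norm ((X:ℂ) + Complex.I * (β:ℂ))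
    have h3 := Complex.abs_im_le_norm ((X:ℂ) + Complex.I * (β:ℂ))
    rw [hre] at h2; rw [him] at h3
    have : |β| = β := abs_of_nonneg (by linarith)
    rw [this] at h3
    exact max_le (by linarith) h2
  exact inv_anti₀ (by positivity) h1

lemma coord_le_znorm {d : ℕ} (k : Fin d → ℤ) (i : Fin d) : |(k i : ℝ)| ≤ znorm k := by
  rw [znorm, ← Real.sqrt_sq_eq_abs]
  apply Real.sqrt_le_sqrt
  rw [nsq]
  exact Finset.single_le_sum (f := fun j => ((k j : ℝ))^2)
    (fun j _ => by positivity) (Finset.mem_univ i)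

lemma gsum (M : ℕ) : ∑ i ∈ Finset.range (M+1), (max 1 (i:ℝ))⁻¹ ≤ 2 + Real.log (M+1) := by
  rw [Finset.sum_range_succ']
  have h1 : ∀ i : ℕ, (max 1 ((i+1:ℕ):ℝ))⁻¹ = ((i:ℝ)+1)⁻¹ := by
    intro i
    have : max 1 ((i+1:ℕ):ℝ) = ((i:ℝ)+1) := by
      rw [max_eq_right]; · push_cast; ring
      · push_cast; linarith [Nat.cast_nonneg (α := ℝ) i]
    rw [this]
  simp only [h1]
  have h2 : ∑ i ∈ Finset.range M, ((i:ℝ)+1)⁻¹ = (harmonic M : ℝ) := by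
    rw [harmonic]; push_cast; apply Finset.sum_congr rfl; intros; ring
  have h3 := harmonic_le_one_add_log M
  have h4 : Real.log M ≤ Real.log (M+1) := by
    rcases Nat.eq_zero_or_pos M with h|h
    · simp [h]
    · apply Real.log_le_log (by positivity)
      push_cast; linarith
  simp only [Nat.cast_zero, max_eq_left (le_refl 1)] at *
  rw [h2]
  norm_num
  linarith

lemma inj_step (M : ℕ) (s : Finset ℤ) (t : ℤ → ℝ) (j : ℤ → ℕ)
    (hinj : Set.InjOn j s) (hle : ∀ n ∈ s, j n ≤ M)
    (hb : ∀ n ∈ s, t n ≤ (max 1 ((j n : ℕ):ℝ))⁻¹) :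
    ∑ n ∈ s, t n ≤ ∑ i ∈ Finset.range (M+1), (max 1 (i:ℝ))⁻¹ := by
  calc ∑ n ∈ s, t n ≤ ∑ n ∈ s, (max 1 ((j n : ℕ):ℝ))⁻¹ := Finset.sum_le_sum hb
    _ = ∑ i ∈ s.image j, (max 1 (i:ℝ))⁻¹ :=
      (Finset.sum_image (f := fun i : ℕ => (max 1 (i:ℝ))⁻¹) (fun a ha b hb h => hinj ha hb h)).symm
    _ ≤ ∑ i ∈ Finset.range (M+1), (max 1 (i:ℝ))⁻¹ := by
        apply Finset.sum_le_sum_of_subset_of_nonneg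
        · intro i hi
          simp only [Finset.mem_image] at hi
          obtain ⟨n, hn, rfl⟩ := hi
          simp only [Finset.mem_range]
          exact Nat.lt_succ_of_le (hle n hn)
        · intros; positivity

lemma lemA (M : ℕ) (α : ℝ) :
    ∑ n ∈ Finset.Icc (0:ℤ) M, (max 1 |(n:ℝ) - α|)⁻¹ ≤ 2 * (2 + Real.log (M+1)) := by
  set a : ℤ := ⌈α⌉ with ha
  have hαa : α ≤ a := Int.le_ceil α
  have haα : (a:ℝ) - 1 < α := by have := Int.ceil_lt_add_one α; push_cast; linarith
  rw [← Finset.sum_filter_add_sum_filter_not (Finset.Icc (0:ℤ) M) (fun n => n < a)]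
  have h2 : ∑ n ∈ (Finset.Icc (0:ℤ) M).filter (fun n => ¬ n < a), (max 1 |(n:ℝ) - α|)⁻¹
      ≤ ∑ i ∈ Finset.range (M+1), (max 1 (i:ℝ))⁻¹ := by
    apply inj_step M _ _ (fun n => (n - max a 0).toNat)
    · intro x hx y hy h
      simp only [Finset.mem_coe, Finset.mem_filter, Finset.mem_Icc, not_lt] at hx hy
      dsimp only at h
      omega
    · intro n hn
      simp only [Finset.mem_filter, Finset.mem_Icc, not_lt] at hn
      omega
    · intro n hn
      simp only [Finset.mem_filter, Finset.mem_Icc, not_lt] at hn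
      apply inv_anti₀ (by positivity)
      apply max_le_max le_rfl
      have hz : ((n - max a 0).toNat : ℤ) = n - max a 0 := Int.toNat_of_nonneg (by omega)
      have h1 : (((n - max a 0).toNat : ℕ) : ℝ) = (n:ℝ) - ((max a 0 : ℤ):ℝ) := by
        exact_mod_cast hz
      rw [h1]
      have : ((max a 0 : ℤ) : ℝ) ≥ (a : ℝ) := by
        have : a ≤ max a 0 := le_max_left a 0
        exact_mod_cast this
      calc (n:ℝ) - (max a 0 : ℤ) ≤ (n:ℝ) - α := by linarith
        _ ≤ |(n:ℝ) - α| := le_abs_self _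
  have h1 : ∑ n ∈ (Finset.Icc (0:ℤ) M).filter (fun n => n < a), (max 1 |(n:ℝ) - α|)⁻¹
      ≤ ∑ i ∈ Finset.range (M+1), (max 1 (i:ℝ))⁻¹ := by
    apply inj_step M _ _ (fun n => (min (a-1) M - n).toNat)
    · intro x hx y hy h
      simp only [Finset.mem_coe, Finset.mem_filter, Finset.mem_Icc] at hx hy
      dsimp only at h
      omega
    · intro n hn
      simp only [Finset.mem_filter, Finset.mem_Icc] at hn
      omega
    · intro n hn
      simp only [Finset.mem_filter, Finset.mem_Icc] at hn
      apply inv_anti₀ (by positivity)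
      apply max_le_max le_rfl
      have hnb : n ≤ min (a-1) M := by omega
      have hz : ((min (a-1) M - n).toNat : ℤ) = min (a-1) M - n := Int.toNat_of_nonneg (by omega)
      have h1 : (((min (a-1) M - n).toNat : ℕ) : ℝ) = ((min (a-1) M : ℤ):ℝ) - (n:ℝ) := by
        exact_mod_cast hz
      rw [h1]
      have h2 : ((min (a-1) M : ℤ):ℝ) ≤ (a:ℝ) - 1 := by
        have : min (a-1) M ≤ a - 1 := min_le_left _ _
        calc ((min (a-1) M : ℤ):ℝ) ≤ ((a-1:ℤ):ℝ) := by exact_mod_cast this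
          _ = (a:ℝ) - 1 := by push_cast; ring
      calc ((min (a-1) M : ℤ):ℝ) - n ≤ α - n := by linarith
        _ ≤ |(n:ℝ) - α| := by rw [abs_sub_comm]; exact le_abs_self _
  have := gsum M
  linarith

/-- Degree one vertex estimate (Lemma B.2, first part). -/
theorem degree_one_vertex_sum (d : ℕ) (hd : 2 ≤ d) (κ : ℝ) (hκ : 0 < κ) :
    ∃ C : ℝ, 0 < C ∧
      ∀ ε : ℝ, 0 < ε → ε ≤ 1 →
      ∀ k₀ : Fin d → ℤ, znorm k₀ ≤ ε⁻¹ →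
      ∀ α β : ℝ, 1 ≤ β →
        (∑' k : Fin d → ℤ,
          if znorm k < ε⁻¹ then
            (‖((nsq k + nsq (k₀ - k) - α : ℝ) : ℂ) + Complex.I * (β : ℂ)‖)⁻¹
          else 0)
        ≤ C * ε ^ (1 - (d:ℝ) - κ) := by
  obtain ⟨e, rfl⟩ : ∃ e, d = e + 1 := ⟨d - 1, by omega⟩
  set d := e + 1 with hdeq
  set D : ℝ := (2 + Real.log (21*d)) + 2/κ with hD
  have hDpos : 0 < D := by
    have : 0 ≤ Real.log (21*d) := Real.log_nonneg (by have : (1:ℝ) ≤ d := (by exact_mod_cast (by omega : 1 ≤ d)); linarith)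
    positivity
  refine ⟨4 * 5^e * D, by positivity, ?_⟩
  intro ε hε hε1 k₀ hk₀ α β hβ
  set t : ℝ := ε⁻¹ with ht
  have ht1 : 1 ≤ t := one_le_inv_iff₀.2 ⟨hε, hε1⟩
  have htpos : 0 < t := by linarith
  set N : ℕ := ⌈t⌉₊ with hN
  have hN1 : t ≤ N := Nat.le_ceil t
  have hN2 : (N:ℝ) ≤ 2*t := by
    have := Nat.ceil_lt_add_one (by positivity : (0:ℝ) ≤ t)
    linarith
  clear_value t N
  -- the box
  set Box : Finset (Fin d → ℤ) := Fintype.piFinset (fun _ : Fin d => Finset.Icc (-(N:ℤ)) N) with hBox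
  -- the integer quadratic form
  set m : (Fin d → ℤ) → ℤ := fun k => (∑ i, (k i)^2) + ∑ i, (k₀ i - k i)^2 with hm
  have hmcast : ∀ k : Fin d → ℤ, ((m k : ℤ) : ℝ) = nsq k + nsq (k₀ - k) := by
    intro k
    simp only [hm, nsq, Pi.sub_apply]
    push_cast
    ring
  set f : (Fin d → ℤ) → ℝ := fun k =>
    if znorm k < t then
      (‖((nsq k + nsq (k₀ - k) - α : ℝ) : ℂ) + Complex.I * (β : ℂ)‖)⁻¹
    else 0 with hf
  set h : ℤ → ℝ := fun n => (max 1 |(n:ℝ) - α|)⁻¹ with hh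
  have hhnn : ∀ n, 0 ≤ h n := fun n => by positivity
  -- coordinates of k₀ are bounded by N
  have hk₀c : ∀ i, -(N:ℤ) ≤ k₀ i ∧ k₀ i ≤ N := by
    intro i
    have := coord_le_znorm k₀ i
    have h2 : |(k₀ i : ℝ)| ≤ N := by linarith
    rw [abs_le] at h2
    exact ⟨by exact_mod_cast h2.1, by exact_mod_cast h2.2⟩
  -- support
  have hsupp : ∀ k : Fin d → ℤ, k ∉ Box → f k = 0 := by
    intro k hk
    simp only [hBox, Fintype.mem_piFinset, Finset.mem_Icc, not_forall] at hk
    obtain ⟨i, hi⟩ := hk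
    have habs : (N:ℝ) < |(k i : ℝ)| := by
      rw [lt_abs]
      rcases (not_and_or.mp hi) with h' | h'
      · right
        push_neg at h'
        have : (k i : ℤ) < -(N:ℤ) := h'
        have : ((k i : ℤ):ℝ) < -(N:ℝ) := by exact_mod_cast this
        linarith
      · left
        push_neg at h'
        exact_mod_cast h'
    have : ¬ znorm k < t := by
      push_neg
      calc t ≤ N := hN1
        _ ≤ |(k i : ℝ)| := le_of_lt habs
        _ ≤ znorm k := coord_le_znorm k i
    simp [hf, this]
  have htsum : (∑' k : Fin d → ℤ, f k) = ∑ k ∈ Box, f k := tsum_eq_sum hsupp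
  -- termwise bound
  have hterm : ∀ k : Fin d → ℤ, f k ≤ h (m k) := by
    intro k
    simp only [hf]
    by_cases hc : znorm k < t
    · rw [if_pos hc]
      have hx : nsq k + nsq (k₀ - k) - α = ((m k : ℤ):ℝ) - α := by rw [hmcast]
      rw [hx]
      exact abs_inv_le _ _ hβ
    · rw [if_neg hc]; exact hhnn _
  -- range of m on the box
  set M : ℕ := 5 * d * N^2 with hM
  have hmrange : ∀ k ∈ Box, m k ∈ Finset.Icc (0:ℤ) M := by
    intro k hk
    simp only [hBox, Fintype.mem_piFinset, Finset.mem_Icc] at hk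
    simp only [Finset.mem_Icc]
    constructor
    · apply add_nonneg <;> exact Finset.sum_nonneg fun i _ => sq_nonneg _
    · have h1 : ∀ i : Fin d, (k i)^2 ≤ (N:ℤ)^2 := by
        intro i; have := hk i; nlinarith [this.1, this.2]
      have h2 : ∀ i : Fin d, (k₀ i - k i)^2 ≤ 4*(N:ℤ)^2 := by
        intro i; have := hk i; have := hk₀c i; nlinarith
      have hs1 : (∑ i, (k i)^2) ≤ ∑ _i : Fin d, (N:ℤ)^2 := Finset.sum_le_sum fun i _ => h1 i
      have hs2 : (∑ i, (k₀ i - k i)^2) ≤ ∑ _i : Fin d, 4*(N:ℤ)^2 := Finset.sum_le_sum fun i _ => h2 i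
      simp only [Finset.sum_const, Finset.card_univ, Fintype.card_fin, nsmul_eq_mul] at hs1 hs2
      have : m k ≤ d * (N:ℤ)^2 + d * (4*(N:ℤ)^2) := by
        rw [hm]; dsimp only; exact add_le_add hs1 hs2
      have hMcast : (M : ℤ) = 5 * d * (N:ℤ)^2 := by rw [hM]; push_cast; ring
      rw [hMcast]; nlinarith [sq_nonneg (N:ℤ)]
  -- fiber cardinality
  have hIcard : (Finset.Icc (-(N:ℤ)) N).card = 2*N+1 := by
    rw [Int.card_Icc]; omega
  have hfiber : ∀ n : ℤ, (Box.filter (fun k => m k = n)).card ≤ 2 * (2*N+1)^e := by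
    intro n
    have hcard : ((Fintype.piFinset (fun _ : Fin e => Finset.Icc (-(N:ℤ)) N)) ×ˢ
        (Finset.univ : Finset Bool)).card = (2*N+1)^e * 2 := by
      rw [Finset.card_product, Fintype.card_piFinset]
      simp [hIcard]
    calc (Box.filter (fun k => m k = n)).card
        ≤ ((Fintype.piFinset (fun _ : Fin e => Finset.Icc (-(N:ℤ)) N)) ×ˢ
            (Finset.univ : Finset Bool)).card := by
          apply Finset.card_le_card_of_injOn
            (fun k => (fun i : Fin e => k i.castSucc,
              decide (0 ≤ 2 * k (Fin.last e) - k₀ (Fin.last e))))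
          · intro k hk
            simp only [Finset.mem_coe, Finset.mem_filter, hBox, Fintype.mem_piFinset] at hk
            simp only [Finset.mem_coe, Finset.mem_product, Fintype.mem_piFinset, Finset.mem_univ, and_true]
            exact fun i => hk.1 i.castSucc
          · intro k hk k' hk' hkk
            simp only [Finset.mem_coe, Finset.mem_filter] at hk hk'
            simp only [Prod.mk.injEq] at hkk
            obtain ⟨h1, h2⟩ := hkk
            have h1' : ∀ i : Fin e, k i.castSucc = k' i.castSucc := fun i => congrFun h1 i
            have hs : (0 ≤ 2 * k (Fin.last e) - k₀ (Fin.last e)) ↔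
                (0 ≤ 2 * k' (Fin.last e) - k₀ (Fin.last e)) := by
              constructor <;> intro hx
              · exact of_decide_eq_true (h2 ▸ decide_eq_true hx)
              · exact of_decide_eq_true (h2.symm ▸ decide_eq_true hx)
            have hmk := hk.2
            have hmk' := hk'.2
            rw [hm] at hmk hmk'
            simp only at hmk hmk'
            rw [Fin.sum_univ_castSucc (f := fun i => (k i)^2),
              Fin.sum_univ_castSucc (f := fun i => (k₀ i - k i)^2)] at hmk
            rw [Fin.sum_univ_castSucc (f := fun i => (k' i)^2),
              Fin.sum_univ_castSucc (f := fun i => (k₀ i - k' i)^2)] at hmk'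
            beta_reduce at hmk hmk'
            have hsum1 : (∑ i : Fin e, (k i.castSucc)^2) = ∑ i : Fin e, (k' i.castSucc)^2 :=
              Finset.sum_congr rfl fun i _ => by rw [h1' i]
            have hsum2 : (∑ i : Fin e, (k₀ i.castSucc - k i.castSucc)^2)
                = ∑ i : Fin e, (k₀ i.castSucc - k' i.castSucc)^2 :=
              Finset.sum_congr rfl fun i _ => by rw [h1' i]
            have heq : (k (Fin.last e))^2 + (k₀ (Fin.last e) - k (Fin.last e))^2
                = (k' (Fin.last e))^2 + (k₀ (Fin.last e) - k' (Fin.last e))^2 := by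
              linarith [hmk, hmk', hsum1, hsum2]
            have hfac : (k (Fin.last e) - k' (Fin.last e)) *
                (2*(k (Fin.last e)) + 2*(k' (Fin.last e)) - 2*(k₀ (Fin.last e))) = 0 := by
              linear_combination heq
            have hxy : k (Fin.last e) = k' (Fin.last e) := by
              rcases mul_eq_zero.1 hfac with h' | h' <;> omega
            funext i
            refine Fin.lastCases ?_ ?_ i
            · exact hxy
            · exact fun j => h1' j
      _ = (2*N+1)^e * 2 := hcard
      _ ≤ 2 * (2*N+1)^e := by ring_nf; exact le_refl _
  -- main chain
  have hchain : (∑ k ∈ Box, f k) ≤ (2 * (2*N+1)^e : ℕ) * (2 * (2 + Real.log (M+1))) := by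
    calc (∑ k ∈ Box, f k) ≤ ∑ k ∈ Box, h (m k) := Finset.sum_le_sum fun k _ => hterm k
      _ = ∑ n ∈ Box.image m, (Box.filter (fun k => m k = n)).card • h n := Finset.sum_comp h m
      _ ≤ ∑ n ∈ Box.image m, (2 * (2*N+1)^e : ℕ) * h n := by
          apply Finset.sum_le_sum
          intro n _
          rw [nsmul_eq_mul]
          exact mul_le_mul_of_nonneg_right (by exact_mod_cast hfiber n) (hhnn n)
      _ = (2 * (2*N+1)^e : ℕ) * ∑ n ∈ Box.image m, h n := by rw [Finset.mul_sum]
      _ ≤ (2 * (2*N+1)^e : ℕ) * ∑ n ∈ Finset.Icc (0:ℤ) M, h n := by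
          apply mul_le_mul_of_nonneg_left _ (by positivity)
          apply Finset.sum_le_sum_of_subset_of_nonneg
          · intro n hn
            obtain ⟨k, hk, rfl⟩ := Finset.mem_image.1 hn
            exact hmrange k hk
          · intro n _ _; exact hhnn n
      _ ≤ (2 * (2*N+1)^e : ℕ) * (2 * (2 + Real.log (M+1))) :=
          mul_le_mul_of_nonneg_left (lemA M α) (by positivity)
  -- final arithmetic
  have hcast : ((2 * (2*N+1)^e : ℕ) : ℝ) = 2 * ((2*(N:ℝ)+1))^e := by push_cast; ring
  have hN3 : 2*(N:ℝ)+1 ≤ 5*t := by linarith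
  have hlog : 2 + Real.log (M+1) ≤ D * t ^ κ := by
    have hM1 : ((M:ℝ)+1) ≤ 21 * d * t^2 := by
      have : (M:ℝ) = 5 * d * (N:ℝ)^2 := by rw [hM]; push_cast; ring
      have hd1 : (1:ℝ) ≤ d := by exact_mod_cast (by omega : 1 ≤ d)
      have hNnn : (0:ℝ) ≤ (N:ℝ) := Nat.cast_nonneg N
      have hNt : (N:ℝ)^2 ≤ 4*t^2 := by
        calc (N:ℝ)^2 ≤ (2*t)^2 := pow_le_pow_left₀ hNnn hN2 2
          _ = 4*t^2 := by ring
      have ht2 : (1:ℝ) ≤ t^2 := by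
        calc (1:ℝ) = 1^2 := by norm_num
          _ ≤ t^2 := pow_le_pow_left₀ (by norm_num) ht1 2
      have h1dt : (1:ℝ) ≤ (d:ℝ)*t^2 := by
        have := mul_le_mul hd1 ht2 (by norm_num) (by positivity : (0:ℝ) ≤ (d:ℝ))
        linarith
      rw [this]
      have h5 : 5*((d:ℝ)*((N:ℝ)^2)) ≤ 5*((d:ℝ)*(4*t^2)) := by
        apply mul_le_mul_of_nonneg_left _ (by norm_num)
        exact mul_le_mul_of_nonneg_left hNt (Nat.cast_nonneg d)
      linarith
    have hlog1 : Real.log ((M:ℝ)+1) ≤ Real.log (21 * d) + 2 * Real.log t := by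
      have ht2pos : (0:ℝ) < t^2 := by positivity
      calc Real.log ((M:ℝ)+1) ≤ Real.log (21 * d * t^2) := by
            apply Real.log_le_log (by positivity) hM1
        _ = Real.log (21 * d) + 2 * Real.log t := by
            rw [Real.log_mul (by positivity : (0:ℝ) < 21*(d:ℝ)).ne' ht2pos.ne', Real.log_pow]
            push_cast; ring
    have hlogt : Real.log t ≤ t ^ κ / κ := Real.log_le_rpow_div htpos.le hκ
    have htκ : 1 ≤ t ^ κ := Real.one_le_rpow ht1 hκ.le
    calc 2 + Real.log (M+1) ≤ (2 + Real.log (21*d)) + 2 * (t ^ κ / κ) := by linarith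
      _ ≤ (2 + Real.log (21*d)) * t ^ κ + (2/κ) * t ^ κ := by
          have h0 : 0 ≤ 2 + Real.log (21*d) := by
            have : 0 ≤ Real.log (21*(d:ℝ)) := Real.log_nonneg (by
              have : (1:ℝ) ≤ d := by exact_mod_cast (by omega : 1 ≤ d)
              linarith)
            linarith
          have e1 : (2 + Real.log (21*(d:ℝ))) ≤ (2 + Real.log (21*(d:ℝ)))*t^κ :=
            le_mul_of_one_le_right h0 htκ
          have e2 : 2*(t^κ/κ) = (2/κ)*t^κ := by ring
          linarith
      _ = D * t ^ κ := by rw [hD]; ring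
  have hεpow : ε ^ (1 - (d:ℝ) - κ) = t^e * t ^ κ := by
    have h1 : (1 : ℝ) - (d:ℝ) - κ = -((e:ℝ) + κ) := by
      have : ((d:ℕ):ℝ) = (e:ℝ) + 1 := by rw [hdeq]; push_cast; ring
      rw [this]; ring
    rw [h1, Real.rpow_neg hε.le, ← Real.inv_rpow hε.le, ← ht,
      Real.rpow_add htpos, Real.rpow_natCast]
  rw [htsum]
  calc (∑ k ∈ Box, f k) ≤ (2 * (2*N+1)^e : ℕ) * (2 * (2 + Real.log (M+1))) := hchain
    _ = (2 * ((2*(N:ℝ)+1))^e) * (2 * (2 + Real.log (M+1))) := by rw [hcast]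
    _ ≤ (2 * (5*t)^e) * (2 * (D * t ^ κ)) := by
        have hlognn : (0:ℝ) ≤ Real.log ((M:ℝ)+1) :=
          Real.log_nonneg (by linarith [Nat.cast_nonneg (α := ℝ) M])
        apply mul_le_mul
        · apply mul_le_mul_of_nonneg_left _ (by norm_num)
          exact pow_le_pow_left₀ (by positivity) hN3 e
        · apply mul_le_mul_of_nonneg_left hlog (by norm_num)
        · linarith
        · exact mul_nonneg (by norm_num) (pow_nonneg (by linarith) e)
    _ = (4 * 5^e * D) * (t^e * t ^ κ) := by ring
    _ = (4 * 5^e * D) * ε ^ (1 - (d:ℝ) - κ) := by rw [hεpow]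

end KWE
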